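/- Let U be a relatively open subset of C and let V = (a, b) be a nonempty open interval in ℝ, and give S = (U × V) \ F the subspace topology from ℝ². Then for every c ∈ U and every point p ∈ ({c} × V) \ F, the set ({c} × V) \ F is the quasi-component of p in S, i.e., ({c} × V) \ F equals the intersection of all clopen subsets of S that contain p. -/

import Mathlib

/-- `c` is a non-endpoint of the Cantor set: `c ∈ C` and for every `ε > 0` both
`(c - ε, c) ∩ C` and `(c, c + ε) ∩ C` are nonempty. -/
def IsNonEndpoint (c : ℝ) : Prop :=
  c ∈ cantorSet ∧ ∀ ε > 0,
    (Set.Ioo (c - ε) c ∩ cantorSet).Nonempty ∧ (Set.Ioo c (c + ε) ∩ cantorSet).Nonempty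

/-- `f(c) = ∑_{n : d n < c} a n`. -/
noncomputable def fFun (d a : ℕ → ℝ) (c : ℝ) : ℝ := ∑' n, if d n < c then a n else 0

/-- `F`, the closure in `ℝ²` of the graph `{(c, f c) : c ∈ C}`. -/
noncomputable def Fset (d a : ℕ → ℝ) : Set (ℝ × ℝ) :=
  closure {p : ℝ × ℝ | ∃ c ∈ cantorSet, p = (c, fFun d a c)}

noncomputable def Rf (d a : ℕ → ℝ) (c : ℝ) : ℝ := ∑' n, if d n ≤ c then a n else 0

section Analytic

variable {d a : ℕ → ℝ}

lemma summable_a (ha_sum : ∑' n, a n = 1) : Summable a := by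
  by_contra h
  rw [tsum_eq_zero_of_not_summable h] at ha_sum
  norm_num at ha_sum

lemma summable_ind (ha_pos : ∀ n, 0 < a n) (hsum : Summable a) (P : ℕ → Prop)
    [DecidablePred P] : Summable (fun n => if P n then a n else 0) := by
  apply Summable.of_nonneg_of_le (fun n => ?_) (fun n => ?_) hsum
  · split
    · exact (ha_pos n).le
    · exact le_refl 0
  · split
    · exact le_refl _
    · exact (ha_pos n).le

lemma fFun_mono (ha_pos : ∀ n, 0 < a n) (hsum : Summable a) {x y : ℝ} (hxy : x ≤ y) :
    fFun d a x ≤ fFun d a y := by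
  apply Summable.tsum_le_tsum _ (summable_ind ha_pos hsum _) (summable_ind ha_pos hsum _)
  intro n
  by_cases h : d n < x
  · simp [h, h.trans_le hxy]
  · simp only [h, if_false]
    split
    · exact (ha_pos n).le
    · exact le_refl 0

lemma fFun_le_Rf (ha_pos : ∀ n, 0 < a n) (hsum : Summable a) (x : ℝ) :
    fFun d a x ≤ Rf d a x := by
  apply Summable.tsum_le_tsum _ (summable_ind ha_pos hsum _) (summable_ind ha_pos hsum _)
  intro n
  by_cases h : d n < x
  · simp [h, h.le]
  · simp only [h, if_false]
    split
    · exact (ha_pos n).le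
    · exact le_refl 0

lemma Rf_le_fFun (ha_pos : ∀ n, 0 < a n) (hsum : Summable a) {x y : ℝ} (hxy : x < y) :
    Rf d a x ≤ fFun d a y := by
  apply Summable.tsum_le_tsum _ (summable_ind ha_pos hsum _) (summable_ind ha_pos hsum _)
  intro n
  by_cases h : d n ≤ x
  · simp [h, h.trans_lt hxy]
  · simp only [h, if_false]
    split
    · exact (ha_pos n).le
    · exact le_refl 0

lemma Rf_eq_of_not_mem {x : ℝ} (hx : x ∉ Set.range d) : Rf d a x = fFun d a x := by
  unfold Rf fFun
  congr 1; ext n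
  have hne : d n ≠ x := fun h => hx ⟨n, h⟩
  have : d n ≤ x ↔ d n < x := by
    constructor
    · exact fun h => lt_of_le_of_ne h hne
    · exact le_of_lt
  simp only [this]

lemma Rf_eq_jump (hd_inj : Function.Injective d) (ha_pos : ∀ n, 0 < a n)
    (hsum : Summable a) (m : ℕ) : Rf d a (d m) = fFun d a (d m) + a m := by
  have h1 : ∀ n, (if d n ≤ d m then a n else 0)
      = (if d n < d m then a n else 0) + (if n = m then a n else 0) := by
    intro n
    by_cases h : n = m
    · subst h; simp
    · have hne : d n ≠ d m := fun he => h (hd_inj he)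
      by_cases h2 : d n < d m
      · simp [h2, h2.le, h]
      · have h3 : ¬ d n ≤ d m := fun hle => h2 (lt_of_le_of_ne hle hne)
        simp [h, h2, h3]
  unfold Rf fFun
  rw [show (fun n => if d n ≤ d m then a n else 0)
      = fun n => (if d n < d m then a n else 0) + (if n = m then a n else 0) from funext h1]
  rw [Summable.tsum_add (summable_ind ha_pos hsum _) (summable_ind ha_pos hsum _)]
  congr 1
  have := tsum_eq_single (L := SummationFilter.unconditional ℕ) (f := fun n => if n = m then a n else 0) m (fun n hn => if_neg hn)
  simpa using this

lemma fFun_lt_Rf (hd_inj : Function.Injective d) (ha_pos : ∀ n, 0 < a n)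
    (hsum : Summable a) (m : ℕ) : fFun d a (d m) < Rf d a (d m) := by
  rw [Rf_eq_jump hd_inj ha_pos hsum m]
  linarith [ha_pos m]

set_option maxHeartbeats 1000000 in
/-- Tail of the series is eventually small, and terms are eventually small. -/
lemma exists_tail_small (hsum : Summable a) (ha_pos : ∀ n, 0 < a n) {ε : ℝ} (hε : 0 < ε) :
    ∃ N : ℕ, (∑' n, a (n + N)) < ε ∧ ∀ k ≥ N, a k < ε := by
  have h1 : Filter.Tendsto (fun N : ℕ => ∑' n, a (n + N)) Filter.atTop (nhds 0) :=
    tendsto_sum_nat_add a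
  have h2 : ∀ᶠ N in Filter.atTop, (∑' n, a (n + N)) < ε := h1.eventually (gt_mem_nhds hε)
  obtain ⟨N, hN⟩ := h2.exists
  refine ⟨N, hN, fun k hk => ?_⟩
  have e1 : a k = a (0 + k) := by rw [Nat.zero_add]
  have e2 : a (0 + k) ≤ ∑' n, a (n + k) :=
    Summable.le_tsum (f := fun n => a (n + k)) ((summable_nat_add_iff k).2 hsum) 0 (fun n _ => (ha_pos _).le)
  have e3 : (∑' n, a (n + k)) ≤ ∑' n, a (n + N) := by
    apply Summable.tsum_le_tsum_of_inj (fun n => n + (k - N)) (add_left_injective _)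
      (fun c _ => (ha_pos _).le)
      (fun n => le_of_eq (by show a (n + k) = a (n + (k - N) + N); congr 1; omega))
      ((summable_nat_add_iff k).2 hsum) ((summable_nat_add_iff N).2 hsum)
  linarith

end Analytic
section Approx

variable {d a : ℕ → ℝ}

lemma left_approx (ha_pos : ∀ n, 0 < a n) (hsum : Summable a) (x : ℝ) {ε : ℝ} (hε : 0 < ε) :
    ∃ δ > 0, ∀ x', x - δ < x' → x' ≤ x → fFun d a x - ε < fFun d a x' := by
  obtain ⟨N, hN, -⟩ := exists_tail_small hsum ha_pos hε
  set g : ℕ → ℝ := fun n => if d n < x then a n else 0 with hg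
  have hsg : Summable g := summable_ind ha_pos hsum _
  have hsplit : fFun d a x = ∑ i ∈ Finset.range N, g i + ∑' n, g (n + N) :=
    (Summable.sum_add_tsum_nat_add (f := g) N hsg).symm
  have htail : (∑' n, g (n + N)) ≤ ∑' n, a (n + N) := by
    apply Summable.tsum_le_tsum (f := fun n => g (n + N)) (g := fun n => a (n + N)) _
      ((summable_nat_add_iff N).2 hsg) ((summable_nat_add_iff N).2 hsum)
    intro n
    simp only [hg]
    split
    · exact le_refl _
    · exact (ha_pos _).le
  set T := (Finset.range N).filter (fun n => d n < x) with hT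
  set s := insert (1:ℝ) (T.image (fun n => x - d n)) with hs
  have hsne : s.Nonempty := ⟨1, Finset.mem_insert_self _ _⟩
  set δ := s.min' hsne with hδ
  have hδpos : 0 < δ := by
    rw [hδ, Finset.lt_min'_iff]
    intro y hy
    rcases Finset.mem_insert.1 hy with h | h
    · rw [h]; norm_num
    · obtain ⟨n, hn, rfl⟩ := Finset.mem_image.1 h
      have : d n < x := (Finset.mem_filter.1 hn).2
      linarith
  refine ⟨δ, hδpos, fun x' h1 h2 => ?_⟩
  have hsum_le : ∑ i ∈ Finset.range N, g i
      ≤ ∑ i ∈ Finset.range N, (if d i < x' then a i else 0) := by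
    apply Finset.sum_le_sum
    intro i hi
    simp only [hg]
    by_cases hd : d i < x
    · have hmem : i ∈ T := Finset.mem_filter.2 ⟨hi, hd⟩
      have : δ ≤ x - d i := Finset.min'_le _ _ (Finset.mem_insert_of_mem
        (Finset.mem_image.2 ⟨i, hmem, rfl⟩))
      have hdi : d i < x' := by linarith
      simp [hd, hdi]
    · simp only [hd, if_false]
      split
      · exact (ha_pos _).le
      · exact le_refl 0
  have hle2 : ∑ i ∈ Finset.range N, (if d i < x' then a i else 0) ≤ fFun d a x' :=
    Summable.sum_le_tsum (f := fun n => if d n < x' then a n else 0) _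
      (fun i _ => by split; exacts [(ha_pos _).le, le_refl 0])
      (summable_ind ha_pos hsum _)
  have : fFun d a x ≤ ∑ i ∈ Finset.range N, g i + ∑' n, a (n + N) := by
    rw [hsplit]; linarith
  linarith

lemma right_approx (ha_pos : ∀ n, 0 < a n) (hsum : Summable a) (x : ℝ) {ε : ℝ} (hε : 0 < ε) :
    ∃ δ > 0, ∀ x', x' < x + δ → fFun d a x' < Rf d a x + ε := by
  obtain ⟨N, hN, -⟩ := exists_tail_small hsum ha_pos hε
  set T := (Finset.range N).filter (fun n => x < d n) with hT
  set s := insert (1:ℝ) (T.image (fun n => d n - x)) with hs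
  have hsne : s.Nonempty := ⟨1, Finset.mem_insert_self _ _⟩
  set δ := s.min' hsne with hδ
  have hδpos : 0 < δ := by
    rw [hδ, Finset.lt_min'_iff]
    intro y hy
    rcases Finset.mem_insert.1 hy with h | h
    · rw [h]; norm_num
    · obtain ⟨n, hn, rfl⟩ := Finset.mem_image.1 h
      have : x < d n := (Finset.mem_filter.1 hn).2
      linarith
  refine ⟨δ, hδpos, fun x' h1 => ?_⟩
  set g' : ℕ → ℝ := fun n => if d n < x' then a n else 0 with hg'
  have hsg' : Summable g' := summable_ind ha_pos hsum _
  have hsplit : fFun d a x' = ∑ i ∈ Finset.range N, g' i + ∑' n, g' (n + N) :=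
    (Summable.sum_add_tsum_nat_add (f := g') N hsg').symm
  have htail : (∑' n, g' (n + N)) ≤ ∑' n, a (n + N) := by
    apply Summable.tsum_le_tsum (f := fun n => g' (n + N)) (g := fun n => a (n + N)) _
      ((summable_nat_add_iff N).2 hsg') ((summable_nat_add_iff N).2 hsum)
    intro n
    simp only [hg']
    split
    · exact le_refl _
    · exact (ha_pos _).le
  have hsum_le : ∑ i ∈ Finset.range N, g' i
      ≤ ∑ i ∈ Finset.range N, (if d i ≤ x then a i else 0) := by
    apply Finset.sum_le_sum
    intro i hi
    simp only [hg']
    by_cases hd : d i < x'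
    · have hdle : d i ≤ x := by
        by_contra hcon
        push_neg at hcon
        have hmem : i ∈ T := Finset.mem_filter.2 ⟨hi, hcon⟩
        have : δ ≤ d i - x := Finset.min'_le _ _ (Finset.mem_insert_of_mem
          (Finset.mem_image.2 ⟨i, hmem, rfl⟩))
        linarith
      simp [hd, hdle]
    · simp only [hd, if_false]
      split
      · exact (ha_pos _).le
      · exact le_refl 0
  have hle2 : ∑ i ∈ Finset.range N, (if d i ≤ x then a i else 0) ≤ Rf d a x :=
    Summable.sum_le_tsum (f := fun n => if d n ≤ x then a n else 0) _
      (fun i _ => by split; exacts [(ha_pos _).le, le_refl 0])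
      (summable_ind ha_pos hsum _)
  rw [hsplit]
  linarith

end Approx
section Fiber

variable {d a : ℕ → ℝ}

lemma not_mem_Fset_of_lt (ha_pos : ∀ n, 0 < a n) (hsum : Summable a) {x y : ℝ}
    (h : y < fFun d a x) : (x, y) ∉ Fset d a := by
  intro hmem
  rw [Fset, Metric.mem_closure_iff] at hmem
  set ε := (fFun d a x - y) / 2 with hε
  have hεpos : 0 < ε := by rw [hε]; linarith
  obtain ⟨δ, hδpos, hδ⟩ := left_approx (d := d) ha_pos hsum x hεpos
  obtain ⟨b, hb, hdist⟩ := hmem (min δ ε) (lt_min hδpos hεpos)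
  obtain ⟨c', hc', rfl⟩ := hb
  rw [Prod.dist_eq] at hdist
  have h1 : dist x c' < δ := lt_of_le_of_lt (le_trans (le_max_left _ _) (le_of_eq rfl))
    (lt_of_lt_of_le hdist (min_le_left _ _)) |>.trans_le (le_refl δ)
  have h2 : dist y (fFun d a c') < ε :=
    lt_of_le_of_lt (le_max_right _ _) (lt_of_lt_of_le hdist (min_le_right _ _))
  rw [Real.dist_eq] at h1 h2
  rcases le_or_gt c' x with hcx | hcx
  · have : x - δ < c' := by
      have := abs_lt.1 h1
      linarith [this.1, this.2]
    have hf := hδ c' this hcx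
    have : fFun d a x - ε = y + ε := by rw [hε]; ring
    rw [this] at hf
    have := abs_lt.1 h2
    linarith [this.1, this.2]
  · have hf : fFun d a x ≤ fFun d a c' := fFun_mono ha_pos hsum hcx.le
    have hfx : fFun d a x = y + 2 * ε := by rw [hε]; ring
    have := abs_lt.1 h2
    linarith [this.1, this.2]

lemma not_mem_Fset_of_gt (ha_pos : ∀ n, 0 < a n) (hsum : Summable a) {x y : ℝ}
    (h : Rf d a x < y) : (x, y) ∉ Fset d a := by
  intro hmem
  rw [Fset, Metric.mem_closure_iff] at hmem
  set ε := (y - Rf d a x) / 2 with hε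
  have hεpos : 0 < ε := by rw [hε]; linarith
  obtain ⟨δ, hδpos, hδ⟩ := right_approx (d := d) ha_pos hsum x hεpos
  obtain ⟨b, hb, hdist⟩ := hmem (min δ ε) (lt_min hδpos hεpos)
  obtain ⟨c', hc', rfl⟩ := hb
  rw [Prod.dist_eq] at hdist
  have h1 : dist x c' < δ :=
    lt_of_le_of_lt (le_max_left _ _) (lt_of_lt_of_le hdist (min_le_left _ _))
  have h2 : dist y (fFun d a c') < ε :=
    lt_of_le_of_lt (le_max_right _ _) (lt_of_lt_of_le hdist (min_le_right _ _))
  rw [Real.dist_eq] at h1 h2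
  have habs := abs_lt.1 h2
  have hRy : Rf d a x = y - 2 * ε := by rw [hε]; ring
  rcases le_or_gt c' x with hcx | hcx
  · have hf : fFun d a c' ≤ fFun d a x := fFun_mono ha_pos hsum hcx
    have hfR : fFun d a x ≤ Rf d a x := fFun_le_Rf ha_pos hsum x
    linarith [habs.1, habs.2]
  · have hcδ : c' < x + δ := by
      have := abs_lt.1 h1
      linarith [this.1, this.2]
    have hf := hδ c' hcδ
    linarith [habs.1, habs.2]

lemma not_mem_Fset_of_gap (ha_pos : ∀ n, 0 < a n) (hsum : Summable a) {x y : ℝ}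
    (h1 : fFun d a x < y) (h2 : y < Rf d a x) : (x, y) ∉ Fset d a := by
  intro hmem
  rw [Fset, Metric.mem_closure_iff] at hmem
  set ε := min (y - fFun d a x) (Rf d a x - y) with hε
  have hεpos : 0 < ε := lt_min (by linarith) (by linarith)
  obtain ⟨b, hb, hdist⟩ := hmem ε hεpos
  obtain ⟨c', hc', rfl⟩ := hb
  rw [Prod.dist_eq] at hdist
  have h2' : dist y (fFun d a c') < ε := lt_of_le_of_lt (le_max_right _ _) hdist
  rw [Real.dist_eq] at h2'
  have habs := abs_lt.1 h2'
  rcases le_or_gt c' x with hcx | hcx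
  · have hf : fFun d a c' ≤ fFun d a x := fFun_mono ha_pos hsum hcx
    have : ε ≤ y - fFun d a x := min_le_left _ _
    linarith [habs.1, habs.2]
  · have hf : Rf d a x ≤ fFun d a c' := Rf_le_fFun ha_pos hsum hcx
    have : ε ≤ Rf d a x - y := min_le_right _ _
    linarith [habs.1, habs.2]

lemma graph_mem_Fset {x : ℝ} (hx : x ∈ cantorSet) : (x, fFun d a x) ∈ Fset d a :=
  subset_closure ⟨x, hx, rfl⟩

lemma Rf_mem_Fset (hd_ne : ∀ n, IsNonEndpoint (d n)) (ha_pos : ∀ n, 0 < a n)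
    (hsum : Summable a) (m : ℕ) : (d m, Rf d a (d m)) ∈ Fset d a := by
  rw [Fset, Metric.mem_closure_iff]
  intro ε hε
  obtain ⟨δ, hδpos, hδ⟩ := right_approx (d := d) ha_pos hsum (d m) (half_pos hε)
  obtain ⟨z, hzIoo, hzC⟩ := ((hd_ne m).2 (min δ (ε/2)) (lt_min hδpos (half_pos hε))).2
  refine ⟨(z, fFun d a z), ⟨z, hzC, rfl⟩, ?_⟩
  rw [Prod.dist_eq, Real.dist_eq, Real.dist_eq]
  have hz1 : d m < z := hzIoo.1
  have hz2 : z < d m + min δ (ε/2) := hzIoo.2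
  have hfl : Rf d a (d m) ≤ fFun d a z := Rf_le_fFun ha_pos hsum hz1
  have hfu : fFun d a z < Rf d a (d m) + ε/2 := hδ z (by
    have : min δ (ε/2) ≤ δ := min_le_left _ _
    linarith)
  have hm1 : |d m - z| < ε := by
    rw [abs_lt]
    constructor
    · have : min δ (ε/2) ≤ ε/2 := min_le_right _ _
      linarith
    · linarith
  have hm2 : |Rf d a (d m) - fFun d a z| < ε := by
    rw [abs_lt]
    constructor <;> linarith
  exact max_lt hm1 hm2

end Fiber
section Topo

variable {d a : ℕ → ℝ} {U : Set ℝ} {v w : ℝ}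

lemma clopen_nbhd {A : Set ↥((U ×ˢ Set.Ioo v w) \ Fset d a)} (hA : IsOpen A)
    {Q : ↥((U ×ˢ Set.Ioo v w) \ Fset d a)} (hQ : Q ∈ A) :
    ∃ δ > 0, ∀ (z : ℝ × ℝ) (hz : z ∈ (U ×ˢ Set.Ioo v w) \ Fset d a),
      dist z Q.val < δ → (⟨z, hz⟩ : ↥((U ×ˢ Set.Ioo v w) \ Fset d a)) ∈ A := by
  rw [Metric.isOpen_iff] at hA
  obtain ⟨δ, hδ, hball⟩ := hA Q hQ
  exact ⟨δ, hδ, fun z hz hd => hball (by rw [Metric.mem_ball, Subtype.dist_eq]; exact hd)⟩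

lemma segment_clopen {x y₀ y₁ : ℝ} (h01 : y₀ ≤ y₁)
    (hseg : ∀ y ∈ Set.Icc y₀ y₁, (x, y) ∈ (U ×ˢ Set.Ioo v w) \ Fset d a)
    {A : Set ↥((U ×ˢ Set.Ioo v w) \ Fset d a)} (hA : IsClopen A)
    (h0 : (⟨(x, y₀), hseg y₀ ⟨le_refl _, h01⟩⟩ :
      ↥((U ×ˢ Set.Ioo v w) \ Fset d a)) ∈ A) :
    (⟨(x, y₁), hseg y₁ ⟨h01, le_refl _⟩⟩ :
      ↥((U ×ˢ Set.Ioo v w) \ Fset d a)) ∈ A := by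
  have hmem0 : ((⟨(x, y₀), hseg y₀ ⟨le_refl _, h01⟩⟩ :
      ↥((U ×ˢ Set.Ioo v w) \ Fset d a)) : ℝ × ℝ) ∈ ({x} ×ˢ Set.Icc y₀ y₁) :=
    ⟨Set.mem_singleton x, ⟨le_refl _, h01⟩⟩
  have hmem1 : ((⟨(x, y₁), hseg y₁ ⟨h01, le_refl _⟩⟩ :
      ↥((U ×ˢ Set.Ioo v w) \ Fset d a)) : ℝ × ℝ) ∈ ({x} ×ˢ Set.Icc y₀ y₁) :=
    ⟨Set.mem_singleton x, ⟨h01, le_refl _⟩⟩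
  have himg : Subtype.val '' (Subtype.val ⁻¹' ({x} ×ˢ Set.Icc y₀ y₁) :
      Set ↥((U ×ˢ Set.Ioo v w) \ Fset d a)) = {x} ×ˢ Set.Icc y₀ y₁ := by
    rw [Set.image_preimage_eq_inter_range, Subtype.range_val]
    apply Set.inter_eq_self_of_subset_left
    rintro ⟨px, py⟩ ⟨hx1, hy1⟩
    simp only [Set.mem_singleton_iff] at hx1
    subst hx1
    exact hseg py hy1
  have hpre : IsPreconnected (Subtype.val ⁻¹' ({x} ×ˢ Set.Icc y₀ y₁) :
      Set ↥((U ×ˢ Set.Ioo v w) \ Fset d a)) := by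
    rw [← Topology.IsInducing.subtypeVal.isPreconnected_image, himg]
    exact ((convex_singleton x).prod (convex_Icc y₀ y₁)).isPreconnected
  have hsub := hpre.subset_isClopen hA
    ⟨⟨(x, y₀), hseg y₀ ⟨le_refl _, h01⟩⟩, hmem0, h0⟩
  exact hsub hmem1

lemma exists_d_in (hd_dense : cantorSet ⊆ closure (Set.range d)) {α β z : ℝ}
    (hz : z ∈ cantorSet) (h1 : α < z) (h2 : z < β) : ∃ k, d k ∈ Set.Ioo α β := by
  have hcl := hd_dense hz
  rw [Metric.mem_closure_iff] at hcl
  obtain ⟨b, ⟨k, rfl⟩, hb⟩ := hcl (min (z - α) (β - z)) (lt_min (by linarith) (by linarith))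
  refine ⟨k, ?_, ?_⟩
  · rw [Real.dist_eq] at hb
    have habs := abs_lt.1 hb
    have : min (z - α) (β - z) ≤ z - α := min_le_left _ _
    linarith [habs.2]
  · rw [Real.dist_eq] at hb
    have habs := abs_lt.1 hb
    have : min (z - α) (β - z) ≤ β - z := min_le_right _ _
    linarith [habs.1]

lemma exists_d_avoid_aux (hd_ne : ∀ n, IsNonEndpoint (d n))
    (hd_dense : cantorSet ⊆ closure (Set.range d)) :
    ∀ (n : ℕ) (Bad : Finset ℕ), Bad.card ≤ n → ∀ α β : ℝ,
      (∃ k, d k ∈ Set.Ioo α β) → ∃ k, k ∉ Bad ∧ d k ∈ Set.Ioo α β := by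
  intro n
  induction n with
  | zero =>
    rintro Bad hcard α β ⟨k, hk⟩
    have hB : Bad = ∅ := Finset.card_eq_zero.1 (Nat.le_zero.1 hcard)
    exact ⟨k, by simp [hB], hk⟩
  | succ n ih =>
    rintro Bad hcard α β ⟨k₀, hk₀⟩
    by_cases hmem : k₀ ∈ Bad
    · have hβ : d k₀ < β := hk₀.2
      obtain ⟨z, hzIoo, hzC⟩ := ((hd_ne k₀).2 (β - d k₀) (by linarith)).2
      have hseed : ∃ j, d j ∈ Set.Ioo (d k₀) β :=
        exists_d_in hd_dense hzC hzIoo.1 (by have := hzIoo.2; linarith)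
      obtain ⟨k, hkB, hkI⟩ := ih (Bad.erase k₀)
        (by rw [Finset.card_erase_of_mem hmem]; omega) _ _ hseed
      refine ⟨k, ?_, ⟨lt_trans hk₀.1 hkI.1, hkI.2⟩⟩
      intro hkBad
      have hne : k ≠ k₀ := fun he => (ne_of_gt hkI.1) (by rw [he])
      exact hkB (Finset.mem_erase.2 ⟨hne, hkBad⟩)
    · exact ⟨k₀, hmem, hk₀⟩

lemma exists_d_avoid (hd_ne : ∀ n, IsNonEndpoint (d n))
    (hd_dense : cantorSet ⊆ closure (Set.range d)) (Bad : Finset ℕ) {α β : ℝ}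
    (hseed : ∃ k, d k ∈ Set.Ioo α β) : ∃ k, k ∉ Bad ∧ d k ∈ Set.Ioo α β :=
  exists_d_avoid_aux hd_ne hd_dense Bad.card Bad (le_refl _) α β hseed

end Topo
section Key

variable {d a : ℕ → ℝ} {U : Set ℝ} {v w : ℝ}

lemma dist_horizontal (x1 x2 y : ℝ) : dist ((x1, y) : ℝ × ℝ) ((x2, y) : ℝ × ℝ) = dist x1 x2 := by
  rw [Prod.dist_eq, dist_self]
  exact max_eq_left dist_nonneg

/-- If an `A`-point sits below a non-`A`-point, both strictly below the right fiber value at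
`d m`, we get a contradiction by approaching from the right. -/
lemma kill_right (hd_ne : ∀ n, IsNonEndpoint (d n))
    (hd_dense : cantorSet ⊆ closure (Set.range d)) (ha_pos : ∀ n, 0 < a n)
    (hsum : Summable a) (hUopen : ∃ O : Set ℝ, IsOpen O ∧ U = O ∩ cantorSet)
    {m : ℕ} {s t' : ℝ}
    (hs : ((d m, s) : ℝ × ℝ) ∈ (U ×ˢ Set.Ioo v w) \ Fset d a)
    (ht' : ((d m, t') : ℝ × ℝ) ∈ (U ×ˢ Set.Ioo v w) \ Fset d a)
    (hst : s < t') (htR : t' < Rf d a (d m))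
    {A : Set ↥((U ×ˢ Set.Ioo v w) \ Fset d a)} (hA : IsClopen A)
    (hsA : (⟨(d m, s), hs⟩ : ↥((U ×ˢ Set.Ioo v w) \ Fset d a)) ∈ A)
    (htA : (⟨(d m, t'), ht'⟩ : ↥((U ×ˢ Set.Ioo v w) \ Fset d a)) ∉ A) : False := by
  obtain ⟨δA, hδApos, hA_nb⟩ := clopen_nbhd hA.isOpen hsA
  obtain ⟨δB, hδBpos, hB_nb⟩ := clopen_nbhd hA.compl.isOpen htA
  obtain ⟨O, hO, hUO⟩ := hUopen
  have hmO : d m ∈ O := by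
    have := hs.1.1
    rw [hUO] at this
    exact this.1
  obtain ⟨r, hrpos, hball⟩ := Metric.isOpen_iff.1 hO (d m) hmO
  set δ := min (min δA δB) r with hδdef
  have hδpos : 0 < δ := lt_min (lt_min hδApos hδBpos) hrpos
  obtain ⟨z, hzI, hzC⟩ := ((hd_ne m).2 δ hδpos).2
  obtain ⟨k, hkI⟩ := exists_d_in hd_dense hzC hzI.1 hzI.2
  have hdist : dist (d k) (d m) < δ := by
    rw [Real.dist_eq, abs_lt]
    constructor
    · linarith [hkI.1]
    · linarith [hkI.2]
  have hkU : d k ∈ U := by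
    rw [hUO]
    exact ⟨hball (by rw [Metric.mem_ball]; exact lt_of_lt_of_le hdist (min_le_right _ _)),
      (hd_ne k).1⟩
  have hfk : t' < fFun d a (d k) := lt_of_lt_of_le htR (Rf_le_fFun ha_pos hsum hkI.1)
  have hsv : s ∈ Set.Ioo v w := hs.1.2
  have htv : t' ∈ Set.Ioo v w := ht'.1.2
  have hseg : ∀ y ∈ Set.Icc s t', ((d k, y) : ℝ × ℝ) ∈ (U ×ˢ Set.Ioo v w) \ Fset d a :=
    fun y hy => ⟨⟨hkU, ⟨lt_of_lt_of_le hsv.1 hy.1, lt_of_le_of_lt hy.2 htv.2⟩⟩,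
      not_mem_Fset_of_lt ha_pos hsum (lt_of_le_of_lt hy.2 hfk)⟩
  have hdA : dist ((d k, s) : ℝ × ℝ) ((d m, s) : ℝ × ℝ) < δA := by
    rw [dist_horizontal]
    exact lt_of_lt_of_le hdist (le_trans (min_le_left _ _) (min_le_left _ _))
  have hdB : dist ((d k, t') : ℝ × ℝ) ((d m, t') : ℝ × ℝ) < δB := by
    rw [dist_horizontal]
    exact lt_of_lt_of_le hdist (le_trans (min_le_left _ _) (min_le_right _ _))
  have h1 : (⟨(d k, s), hseg s ⟨le_refl _, hst.le⟩⟩ :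
      ↥((U ×ˢ Set.Ioo v w) \ Fset d a)) ∈ A := hA_nb _ _ hdA
  have h2 : (⟨(d k, t'), hseg t' ⟨hst.le, le_refl _⟩⟩ :
      ↥((U ×ˢ Set.Ioo v w) \ Fset d a)) ∈ Aᶜ := hB_nb _ _ hdB
  exact h2 (segment_clopen hst.le hseg hA h1)

/-- Symmetric: an `A`-point strictly above the left fiber value at `d m`, below a
non-`A`-point; contradiction by approaching from the left. -/
lemma kill_left (hd_ne : ∀ n, IsNonEndpoint (d n))
    (hd_dense : cantorSet ⊆ closure (Set.range d)) (ha_pos : ∀ n, 0 < a n)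
    (hsum : Summable a) (hUopen : ∃ O : Set ℝ, IsOpen O ∧ U = O ∩ cantorSet)
    {m : ℕ} {s' t : ℝ}
    (hs : ((d m, s') : ℝ × ℝ) ∈ (U ×ˢ Set.Ioo v w) \ Fset d a)
    (ht : ((d m, t) : ℝ × ℝ) ∈ (U ×ˢ Set.Ioo v w) \ Fset d a)
    (hst : s' < t) (hfs : fFun d a (d m) < s')
    {A : Set ↥((U ×ˢ Set.Ioo v w) \ Fset d a)} (hA : IsClopen A)
    (hsA : (⟨(d m, s'), hs⟩ : ↥((U ×ˢ Set.Ioo v w) \ Fset d a)) ∈ A)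
    (htA : (⟨(d m, t), ht⟩ : ↥((U ×ˢ Set.Ioo v w) \ Fset d a)) ∉ A) : False := by
  obtain ⟨δA, hδApos, hA_nb⟩ := clopen_nbhd hA.isOpen hsA
  obtain ⟨δB, hδBpos, hB_nb⟩ := clopen_nbhd hA.compl.isOpen htA
  obtain ⟨O, hO, hUO⟩ := hUopen
  have hmO : d m ∈ O := by
    have := hs.1.1
    rw [hUO] at this
    exact this.1
  obtain ⟨r, hrpos, hball⟩ := Metric.isOpen_iff.1 hO (d m) hmO
  set δ := min (min δA δB) r with hδdef
  have hδpos : 0 < δ := lt_min (lt_min hδApos hδBpos) hrpos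
  obtain ⟨z, hzI, hzC⟩ := ((hd_ne m).2 δ hδpos).1
  obtain ⟨k, hkI⟩ := exists_d_in hd_dense hzC hzI.1 hzI.2
  have hdist : dist (d k) (d m) < δ := by
    rw [Real.dist_eq, abs_lt]
    constructor
    · linarith [hkI.1]
    · linarith [hkI.2]
  have hkU : d k ∈ U := by
    rw [hUO]
    exact ⟨hball (by rw [Metric.mem_ball]; exact lt_of_lt_of_le hdist (min_le_right _ _)),
      (hd_ne k).1⟩
  have hfk : Rf d a (d k) < s' := lt_of_le_of_lt (Rf_le_fFun ha_pos hsum hkI.2) hfs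
  have hsv : s' ∈ Set.Ioo v w := hs.1.2
  have htv : t ∈ Set.Ioo v w := ht.1.2
  have hseg : ∀ y ∈ Set.Icc s' t, ((d k, y) : ℝ × ℝ) ∈ (U ×ˢ Set.Ioo v w) \ Fset d a :=
    fun y hy => ⟨⟨hkU, ⟨lt_of_lt_of_le hsv.1 hy.1, lt_of_le_of_lt hy.2 htv.2⟩⟩,
      not_mem_Fset_of_gt ha_pos hsum (lt_of_lt_of_le hfk hy.1)⟩
  have hdA : dist ((d k, s') : ℝ × ℝ) ((d m, s') : ℝ × ℝ) < δA := by
    rw [dist_horizontal]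
    exact lt_of_lt_of_le hdist (le_trans (min_le_left _ _) (min_le_left _ _))
  have hdB : dist ((d k, t) : ℝ × ℝ) ((d m, t) : ℝ × ℝ) < δB := by
    rw [dist_horizontal]
    exact lt_of_lt_of_le hdist (le_trans (min_le_left _ _) (min_le_right _ _))
  have h1 : (⟨(d k, s'), hseg s' ⟨le_refl _, hst.le⟩⟩ :
      ↥((U ×ˢ Set.Ioo v w) \ Fset d a)) ∈ A := hA_nb _ _ hdA
  have h2 : (⟨(d k, t), hseg t ⟨hst.le, le_refl _⟩⟩ :
      ↥((U ×ˢ Set.Ioo v w) \ Fset d a)) ∈ Aᶜ := hB_nb _ _ hdB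
  exact h2 (segment_clopen hst.le hseg hA h1)

/-- If the whole fiber at `d m` lies strictly between an `A`-point and a non-`A`-point,
we get a contradiction. -/
lemma step2 (hd_inj : Function.Injective d) (hd_ne : ∀ n, IsNonEndpoint (d n))
    (hd_dense : cantorSet ⊆ closure (Set.range d)) (ha_pos : ∀ n, 0 < a n)
    (hsum : Summable a) (hUopen : ∃ O : Set ℝ, IsOpen O ∧ U = O ∩ cantorSet)
    {m : ℕ} {s t : ℝ}
    (hs : ((d m, s) : ℝ × ℝ) ∈ (U ×ˢ Set.Ioo v w) \ Fset d a)
    (ht : ((d m, t) : ℝ × ℝ) ∈ (U ×ˢ Set.Ioo v w) \ Fset d a)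
    (h1 : s < fFun d a (d m)) (h2 : Rf d a (d m) < t)
    {A : Set ↥((U ×ˢ Set.Ioo v w) \ Fset d a)} (hA : IsClopen A)
    (hsA : (⟨(d m, s), hs⟩ : ↥((U ×ˢ Set.Ioo v w) \ Fset d a)) ∈ A)
    (htA : (⟨(d m, t), ht⟩ : ↥((U ×ˢ Set.Ioo v w) \ Fset d a)) ∉ A) : False := by
  set g := (fFun d a (d m) + Rf d a (d m)) / 2 with hgdef
  have hflt : fFun d a (d m) < Rf d a (d m) := fFun_lt_Rf hd_inj ha_pos hsum m
  have hg1 : fFun d a (d m) < g := by rw [hgdef]; linarith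
  have hg2 : g < Rf d a (d m) := by rw [hgdef]; linarith
  have hgvw : g ∈ Set.Ioo v w :=
    ⟨lt_trans hs.1.2.1 (lt_trans h1 hg1), lt_trans (lt_trans hg2 h2) ht.1.2.2⟩
  have hgS : ((d m, g) : ℝ × ℝ) ∈ (U ×ˢ Set.Ioo v w) \ Fset d a :=
    ⟨⟨hs.1.1, hgvw⟩, not_mem_Fset_of_gap ha_pos hsum hg1 hg2⟩
  by_cases hgA : (⟨(d m, g), hgS⟩ : ↥((U ×ˢ Set.Ioo v w) \ Fset d a)) ∈ A
  · exact kill_left hd_ne hd_dense ha_pos hsum hUopen hgS ht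
      (lt_trans hg2 h2) hg1 hA hgA htA
  · exact kill_right hd_ne hd_dense ha_pos hsum hUopen hs hgS
      (lt_trans h1 hg1) hg2 hA hsA hgA

end Key
section KeyMain

variable {d a : ℕ → ℝ} {U : Set ℝ} {v w : ℝ}

lemma key (hd_inj : Function.Injective d) (hd_ne : ∀ n, IsNonEndpoint (d n))
    (hd_dense : cantorSet ⊆ closure (Set.range d)) (ha_pos : ∀ n, 0 < a n)
    (hsum : Summable a) (hUsub : U ⊆ cantorSet)
    (hUopen : ∃ O : Set ℝ, IsOpen O ∧ U = O ∩ cantorSet)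
    {x y₀ y₁ : ℝ} (h01 : y₀ < y₁)
    (hx0 : ((x, y₀) : ℝ × ℝ) ∈ (U ×ˢ Set.Ioo v w) \ Fset d a)
    (hx1 : ((x, y₁) : ℝ × ℝ) ∈ (U ×ˢ Set.Ioo v w) \ Fset d a)
    {A : Set ↥((U ×ˢ Set.Ioo v w) \ Fset d a)} (hA : IsClopen A)
    (h0A : (⟨(x, y₀), hx0⟩ : ↥((U ×ˢ Set.Ioo v w) \ Fset d a)) ∈ A)
    (h1A : (⟨(x, y₁), hx1⟩ : ↥((U ×ˢ Set.Ioo v w) \ Fset d a)) ∉ A) : False := by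
  have hxU : x ∈ U := hx0.1.1
  have hxC : x ∈ cantorSet := hUsub hxU
  have hy0w : y₀ ∈ Set.Ioo v w := hx0.1.2
  have hy1w : y₁ ∈ Set.Ioo v w := hx1.1.2
  have hy0f : y₀ ≠ fFun d a x := fun h => hx0.2 (h ▸ graph_mem_Fset hxC)
  have hy1f : y₁ ≠ fFun d a x := fun h => hx1.2 (h ▸ graph_mem_Fset hxC)
  by_cases hxd : x ∈ Set.range d
  · obtain ⟨m, rfl⟩ := hxd
    have hy0R : y₀ ≠ Rf d a (d m) := fun h =>
      hx0.2 (h ▸ Rf_mem_Fset hd_ne ha_pos hsum m)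
    have hy1R : y₁ ≠ Rf d a (d m) := fun h =>
      hx1.2 (h ▸ Rf_mem_Fset hd_ne ha_pos hsum m)
    rcases lt_trichotomy y₀ (fFun d a (d m)) with hc0 | hc0 | hc0
    · rcases lt_trichotomy y₁ (fFun d a (d m)) with hc1 | hc1 | hc1
      · -- both below the fiber : vertical segment inside S
        have hseg : ∀ y ∈ Set.Icc y₀ y₁,
            ((d m, y) : ℝ × ℝ) ∈ (U ×ˢ Set.Ioo v w) \ Fset d a := fun y hy =>
          ⟨⟨hxU, ⟨lt_of_lt_of_le hy0w.1 hy.1, lt_of_le_of_lt hy.2 hy1w.2⟩⟩,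
            not_mem_Fset_of_lt ha_pos hsum (lt_of_le_of_lt hy.2 hc1)⟩
        exact h1A (segment_clopen h01.le hseg hA h0A)
      · exact hy1f hc1
      · rcases lt_trichotomy y₁ (Rf d a (d m)) with hd1 | hd1 | hd1
        · exact kill_right hd_ne hd_dense ha_pos hsum hUopen hx0 hx1 h01 hd1 hA h0A h1A
        · exact hy1R hd1
        · exact step2 hd_inj hd_ne hd_dense ha_pos hsum hUopen hx0 hx1 hc0 hd1 hA h0A h1A
    · exact hy0f hc0
    · rcases lt_trichotomy y₀ (Rf d a (d m)) with hd0 | hd0 | hd0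
      · rcases lt_trichotomy y₁ (Rf d a (d m)) with hd1 | hd1 | hd1
        · -- both inside the gap
          have hseg : ∀ y ∈ Set.Icc y₀ y₁,
              ((d m, y) : ℝ × ℝ) ∈ (U ×ˢ Set.Ioo v w) \ Fset d a := fun y hy =>
            ⟨⟨hxU, ⟨lt_of_lt_of_le hy0w.1 hy.1, lt_of_le_of_lt hy.2 hy1w.2⟩⟩,
              not_mem_Fset_of_gap ha_pos hsum (lt_of_lt_of_le hc0 hy.1)
                (lt_of_le_of_lt hy.2 hd1)⟩
          exact h1A (segment_clopen h01.le hseg hA h0A)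
        · exact hy1R hd1
        · exact kill_left hd_ne hd_dense ha_pos hsum hUopen hx0 hx1 h01 hc0 hA h0A h1A
      · exact hy0R hd0
      · -- both above the fiber
        have hseg : ∀ y ∈ Set.Icc y₀ y₁,
            ((d m, y) : ℝ × ℝ) ∈ (U ×ˢ Set.Ioo v w) \ Fset d a := fun y hy =>
          ⟨⟨hxU, ⟨lt_of_lt_of_le hy0w.1 hy.1, lt_of_le_of_lt hy.2 hy1w.2⟩⟩,
            not_mem_Fset_of_gt ha_pos hsum (lt_of_lt_of_le hd0 hy.1)⟩
        exact h1A (segment_clopen h01.le hseg hA h0A)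
  · -- x is not one of the jump points
    have hRe : Rf d a x = fFun d a x := Rf_eq_of_not_mem hxd
    rcases lt_trichotomy y₀ (fFun d a x) with hc0 | hc0 | hc0
    · rcases lt_trichotomy y₁ (fFun d a x) with hc1 | hc1 | hc1
      · have hseg : ∀ y ∈ Set.Icc y₀ y₁,
            ((x, y) : ℝ × ℝ) ∈ (U ×ˢ Set.Ioo v w) \ Fset d a := fun y hy =>
          ⟨⟨hxU, ⟨lt_of_lt_of_le hy0w.1 hy.1, lt_of_le_of_lt hy.2 hy1w.2⟩⟩,
            not_mem_Fset_of_lt ha_pos hsum (lt_of_le_of_lt hy.2 hc1)⟩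
        exact h1A (segment_clopen h01.le hseg hA h0A)
      · exact hy1f hc1
      · -- separated exactly at the continuity point : move to a nearby jump point
        set L := fFun d a x with hL
        set ε := min (L - y₀) (y₁ - L) / 2 with hε
        have hεpos : 0 < ε := by
          rw [hε]
          have := lt_min (show (0:ℝ) < L - y₀ by linarith) (show (0:ℝ) < y₁ - L by linarith)
          linarith [this]
        have hε0 : ε ≤ (L - y₀) / 2 := by
          rw [hε]; have := min_le_left (L - y₀) (y₁ - L); linarith
        have hε1 : ε ≤ (y₁ - L) / 2 := by
          rw [hε]; have := min_le_right (L - y₀) (y₁ - L); linarith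
        obtain ⟨δ₁, hδ₁pos, hδ₁⟩ := left_approx (d := d) ha_pos hsum x hεpos
        obtain ⟨δ₂, hδ₂pos, hδ₂⟩ := right_approx (d := d) ha_pos hsum x hεpos
        obtain ⟨δA, hδApos, hA_nb⟩ := clopen_nbhd hA.isOpen h0A
        obtain ⟨δB, hδBpos, hB_nb⟩ := clopen_nbhd hA.compl.isOpen h1A
        obtain ⟨O, hO, hUO⟩ := hUopen
        have hxO : x ∈ O := by
          have := hxU; rw [hUO] at this; exact this.1
        obtain ⟨r, hrpos, hball⟩ := Metric.isOpen_iff.1 hO x hxO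
        set δ := min (min δ₁ δ₂) (min (min δA δB) r) with hδdef
        have hδpos : 0 < δ :=
          lt_min (lt_min hδ₁pos hδ₂pos) (lt_min (lt_min hδApos hδBpos) hrpos)
        obtain ⟨N, -, hN⟩ := exists_tail_small hsum ha_pos hεpos
        have hseed : (∃ j, d j ∈ Set.Ioo (x - δ) x) ∨ (∃ j, d j ∈ Set.Ioo x (x + δ)) := by
          have hcl := hd_dense hxC
          rw [Metric.mem_closure_iff] at hcl
          obtain ⟨b, ⟨j, rfl⟩, hb⟩ := hcl δ hδpos
          have hne : d j ≠ x := fun h => hxd ⟨j, h⟩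
          rw [Real.dist_eq] at hb
          have habs := abs_lt.1 hb
          rcases lt_or_gt_of_ne hne with h | h
          · exact Or.inl ⟨j, ⟨by linarith [habs.2], h⟩⟩
          · exact Or.inr ⟨j, ⟨h, by linarith [habs.1]⟩⟩
        -- in either case we find a jump point with small jump whose whole fiber is inside
        -- (y₀, y₁), and conclude with `step2`.
        have main : ∀ k : ℕ, a k < ε → d k ∈ Set.Ioo (x - δ) (x + δ) →
            y₀ < fFun d a (d k) → Rf d a (d k) < y₁ → False := by
          intro k hak hkI hsl htg
          have hdist : dist (d k) x < δ := by
            rw [Real.dist_eq, abs_lt]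
            exact ⟨by linarith [hkI.1], by linarith [hkI.2]⟩
          have hkU : d k ∈ U := by
            rw [hUO]
            refine ⟨hball ?_, (hd_ne k).1⟩
            rw [Metric.mem_ball]
            exact lt_of_lt_of_le hdist (le_trans (min_le_right _ _) (min_le_right _ _))
          have hkS0 : ((d k, y₀) : ℝ × ℝ) ∈ (U ×ˢ Set.Ioo v w) \ Fset d a :=
            ⟨⟨hkU, hy0w⟩, not_mem_Fset_of_lt ha_pos hsum hsl⟩
          have hkS1 : ((d k, y₁) : ℝ × ℝ) ∈ (U ×ˢ Set.Ioo v w) \ Fset d a :=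
            ⟨⟨hkU, hy1w⟩, not_mem_Fset_of_gt ha_pos hsum htg⟩
          have hdA : dist ((d k, y₀) : ℝ × ℝ) ((x, y₀) : ℝ × ℝ) < δA := by
            rw [dist_horizontal]
            exact lt_of_lt_of_le hdist (le_trans (min_le_right _ _)
              (le_trans (min_le_left _ _) (min_le_left _ _)))
          have hdB : dist ((d k, y₁) : ℝ × ℝ) ((x, y₁) : ℝ × ℝ) < δB := by
            rw [dist_horizontal]
            exact lt_of_lt_of_le hdist (le_trans (min_le_right _ _)
              (le_trans (min_le_left _ _) (min_le_right _ _)))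
          exact step2 hd_inj hd_ne hd_dense ha_pos hsum ⟨O, hO, hUO⟩ hkS0 hkS1 hsl htg hA
            (hA_nb _ hkS0 hdA) (hB_nb _ hkS1 hdB)
        rcases hseed with hseed | hseed
        · obtain ⟨k, hkN, hkI⟩ := exists_d_avoid hd_ne hd_dense (Finset.range N) hseed
          have hak : a k < ε := hN k (le_of_not_gt (fun h => hkN (Finset.mem_range.2 h)))
          have hfk_low : L - ε < fFun d a (d k) := by
            apply hδ₁ (d k) _ hkI.2.le
            have : δ ≤ δ₁ := le_trans (min_le_left _ _) (min_le_left _ _)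
            linarith [hkI.1]
          have hfk_hi : fFun d a (d k) ≤ L := fFun_mono ha_pos hsum hkI.2.le
          have hRk : Rf d a (d k) = fFun d a (d k) + a k := Rf_eq_jump hd_inj ha_pos hsum k
          refine main k hak ⟨hkI.1, lt_trans hkI.2 (by linarith)⟩ (by linarith) ?_
          rw [hRk]; linarith
        · obtain ⟨k, hkN, hkI⟩ := exists_d_avoid hd_ne hd_dense (Finset.range N) hseed
          have hak : a k < ε := hN k (le_of_not_gt (fun h => hkN (Finset.mem_range.2 h)))
          have hfk_low : L ≤ fFun d a (d k) := by
            rw [← hRe]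
            exact Rf_le_fFun ha_pos hsum hkI.1
          have hfk_hi : fFun d a (d k) < L + ε := by
            have h' := hδ₂ (d k) (by
              have : δ ≤ δ₂ := le_trans (min_le_left _ _) (min_le_right _ _)
              linarith [hkI.2])
            rw [hRe] at h'
            exact h'
          have hRk : Rf d a (d k) = fFun d a (d k) + a k := Rf_eq_jump hd_inj ha_pos hsum k
          refine main k hak ⟨lt_trans (by linarith) hkI.1, hkI.2⟩ (by linarith) ?_
          rw [hRk]; linarith
    · exact hy0f hc0
    · -- both above
      have hseg : ∀ y ∈ Set.Icc y₀ y₁,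
          ((x, y) : ℝ × ℝ) ∈ (U ×ˢ Set.Ioo v w) \ Fset d a := fun y hy =>
        ⟨⟨hxU, ⟨lt_of_lt_of_le hy0w.1 hy.1, lt_of_le_of_lt hy.2 hy1w.2⟩⟩,
          not_mem_Fset_of_gt ha_pos hsum (by rw [hRe]; exact lt_of_lt_of_le hc0 hy.1)⟩
      exact h1A (segment_clopen h01.le hseg hA h0A)

end KeyMain
section NoInterval

lemma preCantorSet_subset_unitInterval' : ∀ n, preCantorSet n ⊆ Set.Icc 0 1 := by
  intro n
  induction n with
  | zero => exact subset_rfl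
  | succ n ih =>
    rintro x (⟨y, hy, rfl⟩ | ⟨y, hy, rfl⟩)
    · have h := ih hy
      exact ⟨by linarith [h.1], by linarith [h.2]⟩
    · have h := ih hy
      exact ⟨by linarith [h.1], by linarith [h.2]⟩

lemma cantor_interval_bound :
    ∀ n (α β : ℝ), α < β → Set.Ioo α β ⊆ preCantorSet n → β - α ≤ (1/3 : ℝ)^n := by
  intro n
  induction n with
  | zero =>
    intro α β hαβ hsub
    simp only [pow_zero]
    by_contra hcon
    push_neg at hcon
    set ε := (β - α - 1)/3 with hε
    have hεpos : 0 < ε := by rw [hε]; linarith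
    have hεlt : ε < (β - α)/2 := by rw [hε]; linarith
    have h1 := hsub (show α + ε ∈ Set.Ioo α β by constructor <;> linarith)
    have h2 := hsub (show β - ε ∈ Set.Ioo α β by constructor <;> linarith)
    rw [preCantorSet_zero] at h1 h2
    have := h1.1
    have := h2.2
    rw [hε] at *
    linarith [h1.1, h2.2]
  | succ n ih =>
    intro α β hαβ hsub
    have hmid : β ≤ 2/3 ∨ 1/3 ≤ α := by
      by_contra hcon
      push_neg at hcon
      obtain ⟨hβ, hα⟩ := hcon
      have hl : max α (1/3 : ℝ) < min β (2/3 : ℝ) := by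
        apply max_lt (lt_min hαβ (by linarith)) (lt_min (by linarith) (by norm_num))
      set t := (max α (1/3 : ℝ) + min β (2/3 : ℝ))/2 with htdef
      have h1 : max α (1/3 : ℝ) < t := by rw [htdef]; linarith
      have h2 : t < min β (2/3 : ℝ) := by rw [htdef]; linarith
      have ht : t ∈ Set.Ioo α β :=
        ⟨lt_of_le_of_lt (le_max_left _ _) h1, lt_of_lt_of_le h2 (min_le_left _ _)⟩
      rcases hsub ht with ⟨y, hy, he⟩ | ⟨y, hy, he⟩
      · have hy1 := (preCantorSet_subset_unitInterval' n hy).2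
        have e1 : t ≤ 1/3 := by rw [← he]; linarith
        have e2 : (1:ℝ)/3 < t := lt_of_le_of_lt (le_max_right α (1/3 : ℝ)) h1
        linarith
      · have hy0 := (preCantorSet_subset_unitInterval' n hy).1
        have e1 : (2:ℝ)/3 ≤ t := by rw [← he]; linarith
        have e2 : t < 2/3 := lt_of_lt_of_le h2 (min_le_right _ _)
        linarith
    rcases hmid with hmid | hmid
    · have hsub' : Set.Ioo (3*α) (3*β) ⊆ preCantorSet n := by
        intro z hz
        have hz3 : z/3 ∈ Set.Ioo α β := ⟨by linarith [hz.1], by linarith [hz.2]⟩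
        rcases hsub hz3 with ⟨y, hy, he⟩ | ⟨y, hy, he⟩
        · have : y = z := by
            dsimp only at he
            linarith
          rwa [← this]
        · have hy0 := (preCantorSet_subset_unitInterval' n hy).1
          dsimp only at he
          have e1 : (2:ℝ)/3 ≤ z/3 := by linarith
          have e2 : z/3 < 2/3 := lt_of_lt_of_le hz3.2 (by linarith)
          linarith
      have := ih (3*α) (3*β) (by linarith) hsub'
      rw [pow_succ]
      linarith
    · have hsub' : Set.Ioo (3*α - 2) (3*β - 2) ⊆ preCantorSet n := by
        intro z hz
        have hz3 : (z + 2)/3 ∈ Set.Ioo α β := ⟨by linarith [hz.1], by linarith [hz.2]⟩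
        rcases hsub hz3 with ⟨y, hy, he⟩ | ⟨y, hy, he⟩
        · have hy1 := (preCantorSet_subset_unitInterval' n hy).2
          dsimp only at he
          have e1 : (z + 2)/3 ≤ 1/3 := by linarith
          have e2 : 1/3 < (z + 2)/3 := lt_of_le_of_lt hmid hz3.1
          linarith
        · have : y = z := by
            dsimp only at he
            linarith
          rwa [← this]
      have := ih (3*α - 2) (3*β - 2) (by linarith) hsub'
      rw [pow_succ]
      linarith
  
lemma exists_not_cantor {α β : ℝ} (h : α < β) : ∃ m ∈ Set.Ioo α β, m ∉ cantorSet := by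
  obtain ⟨n, hn⟩ := exists_pow_lt_of_lt_one (show (0:ℝ) < β - α by linarith)
    (by norm_num : (1:ℝ)/3 < 1)
  by_contra hcon
  push_neg at hcon
  have hsub : Set.Ioo α β ⊆ preCantorSet n := fun m hm =>
    Set.mem_iInter.1 (hcon m hm) n
  have := cantor_interval_bound n α β h hsub
  linarith

end NoInterval
/-- If `U` is relatively open in `C` and `V = (v, w)` is a nonempty open interval, then for every
`c ∈ U` and every point `p` of `({c} × V) \ F`, the set `({c} × V) \ F` is the quasi-component
of `p` in `S = (U × V) \ F` (with the subspace topology): it equals the intersection of all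
clopen subsets of `S` containing `p`. -/
theorem stmt7 (d a : ℕ → ℝ) (hd_inj : Function.Injective d)
    (hd_ne : ∀ n, IsNonEndpoint (d n)) (hd_dense : cantorSet ⊆ closure (Set.range d))
    (ha_pos : ∀ n, 0 < a n) (ha_sum : ∑' n, a n = 1)
    (U : Set ℝ) (hUsub : U ⊆ cantorSet) (hUopen : ∃ O : Set ℝ, IsOpen O ∧ U = O ∩ cantorSet)
    (v w : ℝ) (hvw : v < w) (c : ℝ) (hc : c ∈ U)
    (p : ↥((U ×ˢ Set.Ioo v w) \ Fset d a)) (hp : (p : ℝ × ℝ).1 = c) :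
    {q : ↥((U ×ˢ Set.Ioo v w) \ Fset d a) | (q : ℝ × ℝ).1 = c} =
      ⋂₀ {A : Set ↥((U ×ˢ Set.Ioo v w) \ Fset d a) | IsClopen A ∧ p ∈ A} := by
  have hsum : Summable a := summable_a ha_sum
  apply Set.Subset.antisymm
  · intro q hq
    rw [Set.mem_sInter]
    rintro A ⟨hA, hpA⟩
    by_contra hqA
    have hq' : (q : ℝ × ℝ).1 = c := hq
    have hpmem : ((c, (p : ℝ × ℝ).2) : ℝ × ℝ) ∈ (U ×ˢ Set.Ioo v w) \ Fset d a := by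
      rw [← hp]
      exact p.2
    have hqmem : ((c, (q : ℝ × ℝ).2) : ℝ × ℝ) ∈ (U ×ˢ Set.Ioo v w) \ Fset d a := by
      rw [← hq']
      exact q.2
    have hpe : (⟨(c, (p : ℝ × ℝ).2), hpmem⟩ : ↥((U ×ˢ Set.Ioo v w) \ Fset d a)) = p :=
      Subtype.ext (Prod.ext hp.symm rfl)
    have hqe : (⟨(c, (q : ℝ × ℝ).2), hqmem⟩ : ↥((U ×ˢ Set.Ioo v w) \ Fset d a)) = q :=
      Subtype.ext (Prod.ext hq'.symm rfl)
    rcases lt_trichotomy ((p : ℝ × ℝ).2) ((q : ℝ × ℝ).2) with h | h | h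
    · exact key hd_inj hd_ne hd_dense ha_pos hsum hUsub hUopen h hpmem hqmem hA
        (by rw [hpe]; exact hpA) (by rw [hqe]; exact hqA)
    · apply hqA
      have hqp : q = p := Subtype.ext (Prod.ext (hq'.trans hp.symm) h.symm)
      rw [hqp]
      exact hpA
    · exact key hd_inj hd_ne hd_dense ha_pos hsum hUsub hUopen h hqmem hpmem hA.compl
        (by rw [hqe]; exact hqA) (by rw [hpe]; exact fun hh => hh hpA)
  · intro q hq
    show (q : ℝ × ℝ).1 = c
    by_contra hne
    have hqU : (q : ℝ × ℝ).1 ∈ U := q.2.1.1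
    rcases lt_or_gt_of_ne hne with h | h
    · obtain ⟨m, hmI, hmC⟩ := exists_not_cantor h
      have hopen : IsOpen {r : ↥((U ×ˢ Set.Ioo v w) \ Fset d a) | m < (r : ℝ × ℝ).1} :=
        isOpen_Ioi.preimage (continuous_fst.comp continuous_subtype_val)
      have hopen2 : IsOpen {r : ↥((U ×ˢ Set.Ioo v w) \ Fset d a) | (r : ℝ × ℝ).1 < m} :=
        isOpen_Iio.preimage (continuous_fst.comp continuous_subtype_val)
      have hco : IsClopen {r : ↥((U ×ˢ Set.Ioo v w) \ Fset d a) | m < (r : ℝ × ℝ).1} := by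
        constructor
        · rw [← isOpen_compl_iff]
          have hceq : {r : ↥((U ×ˢ Set.Ioo v w) \ Fset d a) | m < (r : ℝ × ℝ).1}ᶜ
              = {r : ↥((U ×ˢ Set.Ioo v w) \ Fset d a) | (r : ℝ × ℝ).1 < m} := by
            ext r
            have hrne : (r : ℝ × ℝ).1 ≠ m := fun he => hmC (he ▸ hUsub r.2.1.1)
            simp only [Set.mem_compl_iff, Set.mem_setOf_eq, not_lt]
            constructor
            · intro hle
              exact lt_of_le_of_ne hle hrne
            · exact le_of_lt
          rw [hceq]
          exact hopen2
        · exact hopen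
      have hqmem := Set.mem_sInter.1 hq _ ⟨hco, show m < (p : ℝ × ℝ).1 by rw [hp]; exact hmI.2⟩
      have : m < (q : ℝ × ℝ).1 := hqmem
      linarith [hmI.1]
    · obtain ⟨m, hmI, hmC⟩ := exists_not_cantor h
      have hopen : IsOpen {r : ↥((U ×ˢ Set.Ioo v w) \ Fset d a) | (r : ℝ × ℝ).1 < m} :=
        isOpen_Iio.preimage (continuous_fst.comp continuous_subtype_val)
      have hopen2 : IsOpen {r : ↥((U ×ˢ Set.Ioo v w) \ Fset d a) | m < (r : ℝ × ℝ).1} :=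
        isOpen_Ioi.preimage (continuous_fst.comp continuous_subtype_val)
      have hco : IsClopen {r : ↥((U ×ˢ Set.Ioo v w) \ Fset d a) | (r : ℝ × ℝ).1 < m} := by
        constructor
        · rw [← isOpen_compl_iff]
          have hceq : {r : ↥((U ×ˢ Set.Ioo v w) \ Fset d a) | (r : ℝ × ℝ).1 < m}ᶜ
              = {r : ↥((U ×ˢ Set.Ioo v w) \ Fset d a) | m < (r : ℝ × ℝ).1} := by
            ext r
            have hrne : (r : ℝ × ℝ).1 ≠ m := fun he => hmC (he ▸ hUsub r.2.1.1)
            simp only [Set.mem_compl_iff, Set.mem_setOf_eq, not_lt]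
            constructor
            · intro hle
              exact lt_of_le_of_ne hle (Ne.symm hrne)
            · exact le_of_lt
          rw [hceq]
          exact hopen2
        · exact hopen
      have hqmem := Set.mem_sInter.1 hq _ ⟨hco, show (p : ℝ × ℝ).1 < m by rw [hp]; exact hmI.1⟩
      have : (q : ℝ × ℝ).1 < m := hqmem
      linarith [hmI.2]
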